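/- Let A ⊆ ℝ² be a measurable set with Lebesgue measure 0 < |A| < ∞, let x : ℝ² → ℝ^k be a bounded measurable covariate map, fix β ∈ ℝ^{k+1} and set λ_β(y) = exp(β_0 + Σ_{j=1}^k x_j(y) β_j). Fix presence points y_1, …, y_n ∈ A and let Y_{n+1}, Y_{n+2}, … be i.i.d. random points uniformly distributed on A. For j ∈ {0, 1, …, k} (with x_0 ≡ 1) define the discretized score S_j^{(m)} = Σ_{i=1}^n x_j(y_i) − (|A|/m)·( Σ_{i=1}^n x_j(y_i) λ_β(y_i) + Σ_{i=n+1}^m x_j(Y_i) λ_β(Y_i) ). Then as m → ∞, S_j^{(m)} converges in probability to Σ_{i=1}^n x_j(y_i) − ∫_A x_j(y) λ_β(y) dy, the j-th score of the continuous Poisson point-process log-likelihood l(β) = Σ_{i=1}^n log λ_β(y_i) − ∫_A λ_β(y) dy. -/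

import Mathlib

open Real Finset Filter MeasureTheory ProbabilityTheory Topology

noncomputable section

/-- Extended covariate maps: `x_0 ≡ 1` together with `x_1, …, x_k`. -/
def xec {k : ℕ} (x : ℝ × ℝ → Fin k → ℝ) (j : Fin (k + 1)) (y : ℝ × ℝ) : ℝ :=
  (Fin.cons (1 : ℝ) (x y) : Fin (k + 1) → ℝ) j

/-- The intensity `λ_β(y) = exp(β_0 + Σ_{j=1}^k x_j(y) β_j)`. -/
def lamc {k : ℕ} (x : ℝ × ℝ → Fin k → ℝ) (β : Fin (k + 1) → ℝ) (y : ℝ × ℝ) : ℝ :=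
  Real.exp (β 0 + ∑ j : Fin k, x y j * β j.succ)

/-- The uniform distribution on a set `A ⊆ ℝ²`: the probability measure
proportional to Lebesgue measure restricted to `A`. -/
def unifOn (A : Set (ℝ × ℝ)) : Measure (ℝ × ℝ) :=
  (volume A)⁻¹ • volume.restrict A

lemma score_meas {k : ℕ} (x : ℝ × ℝ → Fin k → ℝ) (hxm : Measurable x) (j : Fin (k+1))
    (β : Fin (k+1) → ℝ) :
    Measurable (fun z => xec x j z * lamc x β z) := by
  have h1 : Measurable (xec x j) := by
    unfold xec
    refine Fin.cases ?_ ?_ j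
    · simp only [Fin.cons_zero]; exact measurable_const
    · intro i
      simp only [Fin.cons_succ]; exact (measurable_pi_apply i).comp hxm
  have h2 : Measurable (lamc x β) := by
    unfold lamc
    exact (measurable_const.add (Finset.measurable_sum _ fun i _ =>
      ((measurable_pi_apply i).comp hxm).mul measurable_const)).exp
  exact h1.mul h2

lemma score_bound {k : ℕ} (x : ℝ × ℝ → Fin k → ℝ) (M : ℝ) (hbd : ∀ y, ‖x y‖ ≤ M)
    (j : Fin (k+1)) (β : Fin (k+1) → ℝ) (z : ℝ × ℝ) :
    |xec x j z * lamc x β z| ≤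
      (max 1 M) * Real.exp (|β 0| + ∑ i : Fin k, M * |β i.succ|) := by
  have hx : |xec x j z| ≤ max 1 M := by
    unfold xec
    refine Fin.cases ?_ ?_ j
    · simp
    · intro i
      simp only [Fin.cons_succ]
      exact le_trans (norm_le_pi_norm (x z) i) (le_trans (hbd z) (le_max_right _ _))
  have hl : |lamc x β z| ≤ Real.exp (|β 0| + ∑ i : Fin k, M * |β i.succ|) := by
    unfold lamc
    rw [abs_of_pos (Real.exp_pos _)]
    apply Real.exp_le_exp.2
    have hsum : ∑ i : Fin k, x z i * β i.succ ≤ ∑ i : Fin k, M * |β i.succ| := by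
      refine Finset.sum_le_sum fun i _ => ?_
      calc x z i * β i.succ ≤ |x z i * β i.succ| := le_abs_self _
        _ = |x z i| * |β i.succ| := abs_mul _ _
        _ ≤ M * |β i.succ| := mul_le_mul_of_nonneg_right
            (le_trans (norm_le_pi_norm (x z) i) (hbd z)) (abs_nonneg _)
    exact add_le_add (le_abs_self _) hsum
  calc |xec x j z * lamc x β z| = |xec x j z| * |lamc x β z| := abs_mul _ _
    _ ≤ _ := mul_le_mul hx hl (abs_nonneg _) (le_trans (abs_nonneg _) hx)

/-- With presence points `y_1, …, y_n ∈ A` fixed and `Y_{n+1}, Y_{n+2}, …` i.i.d.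
uniform on `A`, the discretized score
`S_j^{(m)} = Σ_{i=1}^n x_j(y_i) − (|A|/m)(Σ_{i=1}^n x_j(y_i) λ_β(y_i) + Σ_{i=n+1}^m x_j(Y_i) λ_β(Y_i))`
converges in probability, as `m → ∞`, to
`Σ_{i=1}^n x_j(y_i) − ∫_A x_j(y) λ_β(y) dy`, the `j`-th score of the continuous
Poisson point-process log-likelihood. -/
theorem stmt_9 {k : ℕ} (A : Set (ℝ × ℝ)) (hA : MeasurableSet A)
    (h0 : volume A ≠ 0) (hfin : volume A ≠ ⊤)
    (x : ℝ × ℝ → Fin k → ℝ) (hxm : Measurable x) (M : ℝ) (hbd : ∀ y, ‖x y‖ ≤ M)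
    (β : Fin (k + 1) → ℝ) (n : ℕ) (y : ℕ → ℝ × ℝ) (hy : ∀ i < n, y i ∈ A)
    {Ω : Type*} [MeasurableSpace Ω] (μ : Measure Ω) [IsProbabilityMeasure μ]
    (Y : ℕ → Ω → ℝ × ℝ) (hYmeas : ∀ i, Measurable (Y i))
    (hindep : iIndepFun Y μ)
    (hunif : ∀ i, Measure.map (Y i) μ = unifOn A)
    (j : Fin (k + 1)) :
    TendstoInMeasure μ
      (fun m ω =>
        (∑ i ∈ Finset.range n, xec x j (y i)) -
          ((volume A).toReal / m) *
            ((∑ i ∈ Finset.range n, xec x j (y i) * lamc x β (y i)) +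
              ∑ i ∈ Finset.Ico n m, xec x j (Y i ω) * lamc x β (Y i ω)))
      Filter.atTop
      (fun _ =>
        (∑ i ∈ Finset.range n, xec x j (y i)) -
          ∫ z in A, xec x j z * lamc x β z) := by
  classical
  set f : ℝ × ℝ → ℝ := fun z => xec x j z * lamc x β z with hf
  have hfmeas : Measurable f := score_meas x hxm j β
  set B : ℝ := (max 1 M) * Real.exp (|β 0| + ∑ i : Fin k, M * |β i.succ|) with hB
  have hfbd : ∀ z, |f z| ≤ B := fun z => score_bound x M hbd j β z
  set X : ℕ → Ω → ℝ := fun i ω => f (Y i ω) with hX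
  have hXmeas : ∀ i, Measurable (X i) := fun i => hfmeas.comp (hYmeas i)
  have hint : Integrable (X 0) μ := by
    refine (integrable_const B).mono' (hXmeas 0).aestronglyMeasurable ?_
    exact ae_of_all _ fun ω => hfbd _
  have hindep' : Pairwise (Function.onFun (IndepFun · · μ) X) := fun i i' hii' =>
    (hindep.indepFun hii').comp hfmeas hfmeas
  have hident : ∀ i, IdentDistrib (X i) (X 0) μ μ := by
    intro i
    have hY : IdentDistrib (Y i) (Y 0) μ μ :=
      ⟨(hYmeas i).aemeasurable, (hYmeas 0).aemeasurable, by rw [hunif i, hunif 0]⟩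
    exact hY.comp hfmeas
  have hvol : (volume A).toReal ≠ 0 := by
    simp [ENNReal.toReal_eq_zero_iff, h0, hfin]
  have hE : μ[X 0] = ((volume A).toReal)⁻¹ * ∫ z in A, f z := by
    have h1 : ∫ z, f z ∂(Measure.map (Y 0) μ) = ∫ ω, f (Y 0 ω) ∂μ :=
      integral_map (hYmeas 0).aemeasurable
        (hfmeas.aestronglyMeasurable)
    rw [hunif 0] at h1
    unfold unifOn at h1
    rw [integral_smul_measure, ENNReal.toReal_inv] at h1
    simpa [smul_eq_mul] using h1.symm
  have hslln := strong_law_ae_real X hint hindep' hident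
  refine tendstoInMeasure_of_tendsto_ae (fun m => ?_) ?_
  · exact (aestronglyMeasurable_const.sub (aestronglyMeasurable_const.mul
      (aestronglyMeasurable_const.add
        ((Finset.aestronglyMeasurable_fun_sum _ fun i _ =>
          (hXmeas i).aestronglyMeasurable)))))
  filter_upwards [hslln] with ω hω
  rw [hE] at hω
  set c : ℝ := (volume A).toReal with hc
  set C : ℝ := ∑ i ∈ Finset.range n, xec x j (y i) with hC
  set D : ℝ := ∑ i ∈ Finset.range n, xec x j (y i) * lamc x β (y i) with hD
  -- the term (c/m) * (D + ∑_{Ico n m} X i ω) tends to ∫_A f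
  have key : Tendsto (fun m : ℕ => (c / m) * (D + ∑ i ∈ Finset.Ico n m, X i ω))
      atTop (𝓝 (∫ z in A, f z)) := by
    have h1 : Tendsto (fun m : ℕ => c * ((∑ i ∈ Finset.range m, X i ω) / m))
        atTop (𝓝 (c * (c⁻¹ * ∫ z in A, f z))) := hω.const_mul c
    rw [← mul_assoc, mul_inv_cancel₀ hvol, one_mul] at h1
    have h2 : Tendsto (fun m : ℕ => (c / m) * (D - ∑ i ∈ Finset.range n, X i ω))
        atTop (𝓝 0) := by
      have : Tendsto (fun m : ℕ => ((m : ℝ))⁻¹) atTop (𝓝 0) :=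
        tendsto_inv_atTop_zero.comp tendsto_natCast_atTop_atTop
      have h3 := (this.const_mul c).mul_const (D - ∑ i ∈ Finset.range n, X i ω)
      simpa [div_eq_mul_inv] using h3
    have h4 := h1.add h2
    rw [add_zero] at h4
    refine h4.congr' ?_
    filter_upwards [eventually_ge_atTop n] with m hm
    have hsplit : ∑ i ∈ Finset.Ico n m, X i ω
        = (∑ i ∈ Finset.range m, X i ω) - ∑ i ∈ Finset.range n, X i ω := by
      rw [Finset.range_eq_Ico, Finset.range_eq_Ico, ← Finset.sum_Ico_consecutive _ (Nat.zero_le n) hm]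
      ring
    rw [hsplit]
    field_simp
    ring
  have := key.const_sub C
  exact this.congr (fun m => rfl)
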